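/- Let M be a (κ,γ)-strongly stable n×n matrix (M = HLH⁻¹, ‖L‖ ≤ 1-γ, ‖H‖‖H⁻¹‖ ≤ κ, 0 < γ ≤ 1, κ ≥ 1), let W, X̂ be symmetric matrices with X̂ = M X̂ Mᵀ + W, and let the sequence X_{t+1} = M X_t Mᵀ + W start from symmetric X_1. Then for all t ≥ 1, ‖X_{t+1} - X̂‖ ≤ κ² (1-γ)^{2t} ‖X_1 - X̂‖ ≤ κ² e^{-2γt} ‖X_1 - X̂‖. -/

import Mathlib

open Matrix
open scoped Matrix.Norms.L2Operator

theorem covariance_convergence {n : ℕ}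
    (M H L W Xhat : Matrix (Fin n) (Fin n) ℝ) (X : ℕ → Matrix (Fin n) (Fin n) ℝ)
    (κ γ : ℝ) (hκ : 1 ≤ κ) (hγ0 : 0 < γ) (hγ1 : γ ≤ 1)
    (hH : IsUnit H) (hfact : M = H * L * H⁻¹) (hL : ‖L‖ ≤ 1 - γ) (hHn : ‖H‖ * ‖H⁻¹‖ ≤ κ)
    (hW : W.IsSymm) (hXhat : Xhat.IsSymm) (hfix : Xhat = M * Xhat * Mᵀ + W)
    (hX1 : (X 1).IsSymm) (hrec : ∀ t ≥ 1, X (t + 1) = M * X t * Mᵀ + W) :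
    ∀ t ≥ 1, ‖X (t + 1) - Xhat‖ ≤ κ ^ 2 * (1 - γ) ^ (2 * t) * ‖X 1 - Xhat‖ ∧
      κ ^ 2 * (1 - γ) ^ (2 * t) * ‖X 1 - Xhat‖ ≤
        κ ^ 2 * Real.exp (-2 * γ * t) * ‖X 1 - Xhat‖ := by
  have hγnn : (0 : ℝ) ≤ 1 - γ := by linarith
  have hLnn : (0 : ℝ) ≤ ‖L‖ := norm_nonneg _
  have hHdet : IsUnit H.det := (Matrix.isUnit_iff_isUnit_det H).mp hH
  have hHinv : H * H⁻¹ = 1 := mul_nonsing_inv H hHdet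
  have hinvH : H⁻¹ * H = 1 := nonsing_inv_mul H hHdet
  -- M ^ t = H * L ^ t * H⁻¹
  have hMpow : ∀ t : ℕ, M ^ t = H * L ^ t * H⁻¹ := by
    intro t
    induction t with
    | zero => simp [pow_zero, hHinv]
    | succ t ih =>
      rw [pow_succ, ih, hfact, pow_succ]
      calc H * L ^ t * H⁻¹ * (H * L * H⁻¹)
          = H * L ^ t * (H⁻¹ * H) * (L * H⁻¹) := by
            simp only [Matrix.mul_assoc]
        _ = H * (L ^ t * L) * H⁻¹ := by
            rw [hinvH]; simp only [Matrix.mul_one, Matrix.mul_assoc]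
  have hMt : ∀ t : ℕ, 1 ≤ t → ‖M ^ t‖ ≤ κ * (1 - γ) ^ t := by
    intro t ht
    rw [hMpow t]
    calc ‖H * L ^ t * H⁻¹‖ ≤ ‖H * L ^ t‖ * ‖H⁻¹‖ := l2_opNorm_mul _ _
      _ ≤ ‖H‖ * ‖L ^ t‖ * ‖H⁻¹‖ :=
          mul_le_mul_of_nonneg_right (l2_opNorm_mul _ _) (norm_nonneg _)
      _ ≤ ‖H‖ * ‖L‖ ^ t * ‖H⁻¹‖ := by
          have h1 : ‖L ^ t‖ ≤ ‖L‖ ^ t := norm_pow_le' L ht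
          exact mul_le_mul_of_nonneg_right
            (mul_le_mul_of_nonneg_left h1 (norm_nonneg _)) (norm_nonneg _)
      _ = ‖H‖ * ‖H⁻¹‖ * ‖L‖ ^ t := by ring
      _ ≤ κ * (1 - γ) ^ t := by
          have h1 : ‖L‖ ^ t ≤ (1 - γ) ^ t := pow_le_pow_left₀ hLnn hL t
          have h2 : (0 : ℝ) ≤ ‖H‖ * ‖H⁻¹‖ := mul_nonneg (norm_nonneg _) (norm_nonneg _)
          exact mul_le_mul hHn h1 (pow_nonneg hLnn t) (by linarith)
  -- one-step difference
  have hstep : ∀ t ≥ 1, X (t + 1) - Xhat = M * (X t - Xhat) * Mᵀ := by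
    intro t ht
    rw [hrec t ht]
    calc M * X t * Mᵀ + W - Xhat = M * X t * Mᵀ + W - (M * Xhat * Mᵀ + W) := by
          rw [← hfix]
      _ = M * (X t - Xhat) * Mᵀ := by
          simp only [Matrix.mul_sub, Matrix.sub_mul]
          abel
  -- difference formula
  have hdiff : ∀ t ≥ 1, X (t + 1) - Xhat = M ^ t * (X 1 - Xhat) * (M ^ t)ᵀ := by
    intro t ht
    induction t with
    | zero => omega
    | succ t ih =>
      rcases Nat.eq_zero_or_pos t with h | h
      · subst h
        rw [hstep 1 le_rfl, pow_one]
      · rw [hstep (t + 1) (by omega), ih h]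
        conv_rhs => rw [pow_succ']
        rw [transpose_mul]
        simp only [Matrix.mul_assoc]
  intro t ht
  have hXd : (0 : ℝ) ≤ ‖X 1 - Xhat‖ := norm_nonneg _
  constructor
  · rw [hdiff t ht]
    have hTt : ‖(M ^ t)ᵀ‖ = ‖M ^ t‖ := by
      rw [← conjTranspose_eq_transpose_of_trivial]
      exact l2_opNorm_conjTranspose _
    have hM := hMt t ht
    have hMnn : (0 : ℝ) ≤ ‖M ^ t‖ := norm_nonneg _
    have hc : (0 : ℝ) ≤ κ * (1 - γ) ^ t :=
      mul_nonneg (by linarith) (pow_nonneg hγnn t)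
    calc ‖M ^ t * (X 1 - Xhat) * (M ^ t)ᵀ‖
        ≤ ‖M ^ t * (X 1 - Xhat)‖ * ‖(M ^ t)ᵀ‖ := l2_opNorm_mul _ _
      _ ≤ ‖M ^ t‖ * ‖X 1 - Xhat‖ * ‖M ^ t‖ := by
          rw [hTt]
          exact mul_le_mul_of_nonneg_right (l2_opNorm_mul _ _) hMnn
      _ ≤ (κ * (1 - γ) ^ t) * ‖X 1 - Xhat‖ * (κ * (1 - γ) ^ t) := by
          have h1 : ‖M ^ t‖ * ‖X 1 - Xhat‖ ≤ (κ * (1 - γ) ^ t) * ‖X 1 - Xhat‖ :=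
            mul_le_mul_of_nonneg_right hM hXd
          exact mul_le_mul h1 hM hMnn (mul_nonneg hc hXd)
      _ = κ ^ 2 * (1 - γ) ^ (2 * t) * ‖X 1 - Xhat‖ := by
          rw [two_mul, pow_add]; ring
  · have hexp : (1 - γ) ^ (2 * t) ≤ Real.exp (-2 * γ * t) := by
      have h1 : 1 - γ ≤ Real.exp (-γ) := by
        have := Real.add_one_le_exp (-γ); linarith
      calc (1 - γ) ^ (2 * t) ≤ Real.exp (-γ) ^ (2 * t) := pow_le_pow_left₀ hγnn h1 _
        _ = Real.exp (-2 * γ * t) := by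
            rw [← Real.exp_nat_mul]
            congr 1
            push_cast
            ring
    have hκ2 : (0 : ℝ) ≤ κ ^ 2 := sq_nonneg κ
    exact mul_le_mul_of_nonneg_right (mul_le_mul_of_nonneg_left hexp hκ2) hXd
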